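/- A strongly connected digraph with n vertices has at most 2(n-1) strong bridges. -/

import Mathlib

/-!  Basic notions for finite directed graphs given by an edge set `E : Set (V × V)`. -/

variable {V : Type*}

/-- A path from `u` to `v`: a nonempty list of vertices starting at `u`, ending at `v`,
in which every pair of consecutive vertices is an edge. -/
def IsPath (E : Set (V × V)) (u v : V) (p : List V) : Prop :=
  p.Chain' (fun a b => (a, b) ∈ E) ∧ p.head? = some u ∧ p.getLast? = some v

/-- `v` is reachable from `u` by a path. -/
def Reach (E : Set (V × V)) (u v : V) : Prop := ∃ p, IsPath E u v p

/-- Every vertex reaches every other vertex. -/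
def StronglyConnected (E : Set (V × V)) : Prop := ∀ u v, Reach E u v

/-- An edge `e` is a strong bridge if its removal destroys strong connectivity. -/
def StrongBridge (E : Set (V × V)) (e : V × V) : Prop :=
  e ∈ E ∧ ¬ StronglyConnected (E \ {e})

/-- `u` dominates `v` in the flow graph with start vertex `s`:
every path from `s` to `v` contains `u`. -/
def Dominates (E : Set (V × V)) (s u v : V) : Prop :=
  ∀ p, IsPath E s v p → u ∈ p

/-- An edge `e = (e.1, e.2)` is a bridge of the flow graph `G_s`:
every path from `s` to `e.2` contains the edge `e`. -/
def FlowBridge (E : Set (V × V)) (s : V) (e : V × V) : Prop :=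
  e ∈ E ∧ ∀ p, IsPath E s e.2 p → [e.1, e.2] <:+: p

/-- The reverse digraph: all edges reversed. -/
def rev (E : Set (V × V)) : Set (V × V) := {e | (e.2, e.1) ∈ E}

/-- `D(v)`: the set of vertices dominated by `v` in `G_s`. -/
def Dset (E : Set (V × V)) (s v : V) : Set V := {w | Dominates E s v w}

/-- Reachability inside the induced subgraph `G[S]`: a path all of whose vertices lie in `S`. -/
def ReachableIn (E : Set (V × V)) (S : Set V) (u v : V) : Prop :=
  ∃ p, IsPath E u v p ∧ ∀ w ∈ p, w ∈ S

/-- `C` is a strongly connected component of the induced subgraph `G[S]`. -/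
def SCCIn (E : Set (V × V)) (S : Set V) (C : Set V) : Prop :=
  C.Nonempty ∧ C ⊆ S ∧
  (∀ u ∈ C, ∀ v ∈ C, ReachableIn E S u v) ∧
  (∀ v ∈ S, ∀ u ∈ C, ReachableIn E S u v → ReachableIn E S v u → v ∈ C)

/-- A bridge-dominated component: an SCC of `G[D(v)]` for some bridge `(u,v)` of `G_s`. -/
def BridgeDomComponent (E : Set (V × V)) (s : V) (C : Set V) : Prop :=
  ∃ u v, FlowBridge E s (u, v) ∧ SCCIn E (Dset E s v) C

/-- The set of edges used by a path `p`. -/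
def pathEdges (p : List V) : Set (V × V) := {e | [e.1, e.2] <:+: p}

/-- `u` and `v` are `2`-edge-connected: there are two edge-disjoint paths from `u` to `v`
and two edge-disjoint paths from `v` to `u`. -/
def TwoEdgeConnected (E : Set (V × V)) (u v : V) : Prop :=
  (∃ p q, IsPath E u v p ∧ IsPath E u v q ∧ pathEdges p ∩ pathEdges q = ∅) ∧
  (∃ p q, IsPath E v u p ∧ IsPath E v u q ∧ pathEdges p ∩ pathEdges q = ∅)

/-- `u` is the immediate dominator of `v` in `G_s`: a proper dominator of `v`
dominated by every proper dominator of `v`. -/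
def ImmDom (E : Set (V × V)) (s u v : V) : Prop :=
  Dominates E s u v ∧ u ≠ v ∧
  ∀ w, Dominates E s w v → w ≠ v → Dominates E s w u

/-- `depth v = |Dom(v)|`, the number of dominators of `v` in `G_s`. -/
noncomputable def depth (E : Set (V × V)) (s v : V) : ℕ :=
  {u | Dominates E s u v}.ncard

/-- `z` is the nearest common ancestor of `x` and `y` in the dominator tree of `G_s`:
a common dominator of `x` and `y` dominated by every common dominator. -/
def IsNCA (E : Set (V × V)) (s x y z : V) : Prop :=
  Dominates E s z x ∧ Dominates E s z y ∧
  ∀ w, Dominates E s w x → Dominates E s w y → Dominates E s w z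

/-- `r` is the bridge-decomposition root of `v` in `G_s`: the deepest dominator `r`
of `v` such that `r = s` or `(d(r), r)` is a bridge of `G_s`. -/
def IsBDRoot (E : Set (V × V)) (s v r : V) : Prop :=
  Dominates E s r v ∧
  (r = s ∨ ∃ u, ImmDom E s u r ∧ FlowBridge E s (u, r)) ∧
  ∀ r', Dominates E s r' v →
    (r' = s ∨ ∃ u', ImmDom E s u' r' ∧ FlowBridge E s (u', r')) →
    Dominates E s r' r


section StrongBridgeCount

variable {V : Type*}

private lemma reach_iff_rtg (E : Set (V × V)) (u v : V) :
    Reach E u v ↔ Relation.ReflTransGen (fun a b => (a, b) ∈ E) u v := by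
  constructor
  · rintro ⟨p, hc, hh, hl⟩
    induction p generalizing u with
    | nil => simp at hh
    | cons x t ih =>
      simp only [List.head?_cons, Option.some.injEq] at hh
      subst hh
      cases t with
      | nil =>
        simp only [List.getLast?_singleton, Option.some.injEq] at hl
        subst hl; exact .refl
      | cons y t' =>
        have hc := List.isChain_cons_cons.1 hc
        rw [List.getLast?_cons_cons] at hl
        exact Relation.ReflTransGen.head hc.1 (ih y hc.2 rfl hl)
  · intro h
    induction h using Relation.ReflTransGen.head_induction_on with
    | refl => exact ⟨[v], by simp [IsPath]; exact List.isChain_singleton v⟩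
    | head hab _ ih =>
      obtain ⟨p, hc, hh, hl⟩ := ih
      cases p with
      | nil => simp at hh
      | cons c t =>
        simp only [List.head?_cons, Option.some.injEq] at hh
        subst hh
        exact ⟨_ :: _ :: t, List.isChain_cons_cons.2 ⟨hab, hc⟩, rfl,
          by rw [List.getLast?_cons_cons]; exact hl⟩

private lemma rtg_mono' {E F : Set (V × V)} (h : E ⊆ F) {u v : V}
    (hr : Relation.ReflTransGen (fun a b => (a, b) ∈ E) u v) :
    Relation.ReflTransGen (fun a b => (a, b) ∈ F) u v :=
  Relation.ReflTransGen.mono (fun a b hab => h hab) _ _ hr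

private lemma detour_tail {E : Set (V × V)} {e : V × V} {s : V}
    (hb : Relation.ReflTransGen (fun a b => (a, b) ∈ E \ {e}) s e.2) (x : V)
    (h : Relation.ReflTransGen (fun a b => (a, b) ∈ E) s x) :
    Relation.ReflTransGen (fun a b => (a, b) ∈ E \ {e}) s x := by
  induction h with
  | refl => exact .refl
  | @tail y z hsy hyz ih =>
    by_cases hyx : (y, z) = e
    · have hz : z = e.2 := by rw [← hyx]
      exact hz ▸ hb
    · exact ih.tail ⟨hyz, hyx⟩

private lemma detour_head {E : Set (V × V)} {e : V × V} {s : V}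
    (hb : Relation.ReflTransGen (fun a b => (a, b) ∈ E \ {e}) e.1 s) (x : V)
    (h : Relation.ReflTransGen (fun a b => (a, b) ∈ E) x s) :
    Relation.ReflTransGen (fun a b => (a, b) ∈ E \ {e}) x s := by
  induction h using Relation.ReflTransGen.head_induction_on with
  | refl => exact .refl
  | @head y z hyz hzs ih =>
    by_cases hyx : (y, z) = e
    · have hy : y = e.1 := by rw [← hyx]
      exact hy ▸ hb
    · exact Relation.ReflTransGen.head ⟨hyz, hyx⟩ ih

private lemma bridge_alt {E : Set (V × V)} (hSC : StronglyConnected E)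
    {e : V × V} (hsb : StrongBridge E e) (s : V) :
    ¬ Relation.ReflTransGen (fun a b => (a, b) ∈ E \ {e}) s e.2 ∨
    ¬ Relation.ReflTransGen (fun a b => (a, b) ∈ E \ {e}) e.1 s := by
  by_contra h
  push_neg at h
  exact hsb.2 (fun u v => (reach_iff_rtg _ _ _).2
    ((detour_head h.2 u ((reach_iff_rtg _ _ _).1 (hSC u s))).trans
     (detour_tail h.1 v ((reach_iff_rtg _ _ _).1 (hSC s v)))))

private lemma head_unique {E : Set (V × V)} {s a a' b : V}
    (h1 : (a, b) ∈ E) (h2 : (a', b) ∈ E)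
    (hn1 : ¬ Relation.ReflTransGen (fun x y => (x, y) ∈ E \ {(a, b)}) s b)
    (hn2 : ¬ Relation.ReflTransGen (fun x y => (x, y) ∈ E \ {(a', b)}) s b)
    (hr : Relation.ReflTransGen (fun x y => (x, y) ∈ E) s b) : a = a' := by
  by_contra hne
  set F : Set (V × V) := E \ {(a, b), (a', b)} with hF
  have hsub1 : F ⊆ E \ {(a, b)} :=
    Set.diff_subset_diff_right (Set.singleton_subset_iff.2 (by simp))
  have hsub2 : F ⊆ E \ {(a', b)} :=
    Set.diff_subset_diff_right (Set.singleton_subset_iff.2 (by simp))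
  have key : ∀ x, Relation.ReflTransGen (fun u v => (u, v) ∈ E) s x →
      Relation.ReflTransGen (fun u v => (u, v) ∈ F) s x ∨
      Relation.ReflTransGen (fun u v => (u, v) ∈ F) s a ∨
      Relation.ReflTransGen (fun u v => (u, v) ∈ F) s a' := by
    intro x h
    induction h with
    | refl => exact Or.inl .refl
    | @tail y z hsy hyz ih =>
      rcases ih with h | h | h
      · by_cases hy1 : (y, z) = (a, b)
        · have hy : y = a := (Prod.ext_iff.1 hy1).1
          exact Or.inr (Or.inl (hy ▸ h))
        · by_cases hy2 : (y, z) = (a', b)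
          · have hy : y = a' := (Prod.ext_iff.1 hy2).1
            exact Or.inr (Or.inr (hy ▸ h))
          · exact Or.inl (h.tail ⟨hyz, by simp [hy1, hy2]⟩)
      · exact Or.inr (Or.inl h)
      · exact Or.inr (Or.inr h)
  rcases key b hr with h | h | h
  · exact hn1 (rtg_mono' hsub1 h)
  · refine hn2 (Relation.ReflTransGen.tail (rtg_mono' hsub2 h) ⟨h1, ?_⟩)
    simp only [Set.mem_singleton_iff, Prod.mk.injEq]
    exact fun hc => hne hc.1
  · refine hn1 (Relation.ReflTransGen.tail (rtg_mono' hsub1 h) ⟨h2, ?_⟩)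
    simp only [Set.mem_singleton_iff, Prod.mk.injEq]
    exact fun hc => hne hc.1.symm

private lemma tail_unique {E : Set (V × V)} {s a b b' : V}
    (h1 : (a, b) ∈ E) (h2 : (a, b') ∈ E)
    (hn1 : ¬ Relation.ReflTransGen (fun x y => (x, y) ∈ E \ {(a, b)}) a s)
    (hn2 : ¬ Relation.ReflTransGen (fun x y => (x, y) ∈ E \ {(a, b')}) a s)
    (hr : Relation.ReflTransGen (fun x y => (x, y) ∈ E) a s) : b = b' := by
  by_contra hne
  set F : Set (V × V) := E \ {(a, b), (a, b')} with hF
  have hsub1 : F ⊆ E \ {(a, b)} :=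
    Set.diff_subset_diff_right (Set.singleton_subset_iff.2 (by simp))
  have hsub2 : F ⊆ E \ {(a, b')} :=
    Set.diff_subset_diff_right (Set.singleton_subset_iff.2 (by simp))
  have key : ∀ x, Relation.ReflTransGen (fun u v => (u, v) ∈ E) x s →
      Relation.ReflTransGen (fun u v => (u, v) ∈ F) x s ∨
      Relation.ReflTransGen (fun u v => (u, v) ∈ F) b s ∨
      Relation.ReflTransGen (fun u v => (u, v) ∈ F) b' s := by
    intro x h
    induction h using Relation.ReflTransGen.head_induction_on with
    | refl => exact Or.inl .refl
    | @head y z hyz hzs ih =>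
      rcases ih with h | h | h
      · by_cases hy1 : (y, z) = (a, b)
        · have hz : z = b := (Prod.ext_iff.1 hy1).2
          exact Or.inr (Or.inl (hz ▸ h))
        · by_cases hy2 : (y, z) = (a, b')
          · have hz : z = b' := (Prod.ext_iff.1 hy2).2
            exact Or.inr (Or.inr (hz ▸ h))
          · exact Or.inl (Relation.ReflTransGen.head ⟨hyz, by simp [hy1, hy2]⟩ h)
      · exact Or.inr (Or.inl h)
      · exact Or.inr (Or.inr h)
  rcases key a hr with h | h | h
  · exact hn1 (rtg_mono' hsub1 h)
  · refine hn2 (Relation.ReflTransGen.head (⟨h1, ?_⟩ :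
      (a, b) ∈ E \ {(a, b')}) (rtg_mono' hsub2 h))
    simp only [Set.mem_singleton_iff, Prod.mk.injEq]
    exact fun hc => hne hc.2
  · refine hn1 (Relation.ReflTransGen.head (⟨h2, ?_⟩ :
      (a, b') ∈ E \ {(a, b)}) (rtg_mono' hsub1 h))
    simp only [Set.mem_singleton_iff, Prod.mk.injEq]
    exact fun hc => hne hc.2.symm

end StrongBridgeCount

/-- a strongly connected digraph with `n` vertices has at most
`2(n-1)` strong bridges. -/
theorem stmt1 {V : Type*} [Fintype V] (E : Set (V × V))
    (hSC : StronglyConnected E) :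
    {e : V × V | StrongBridge E e}.ncard ≤ 2 * (Fintype.card V - 1) := by
  classical
  rcases isEmpty_or_nonempty V with hV | hV
  · have : {e : V × V | StrongBridge E e} = ∅ := Set.eq_empty_of_isEmpty _
    simp [this]
  obtain ⟨s⟩ := hV
  set S := {e : V × V | StrongBridge E e} with hS
  set f : V × V → V ⊕ V := fun e =>
    if Relation.ReflTransGen (fun x y => (x, y) ∈ E \ {e}) s e.2
    then Sum.inr e.1 else Sum.inl e.2 with hf
  have hSCr : ∀ u v, Relation.ReflTransGen (fun x y => (x, y) ∈ E) u v :=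
    fun u v => (reach_iff_rtg _ _ _).1 (hSC u v)
  have hinj : Set.InjOn f S := by
    rintro ⟨a, b⟩ he ⟨a', b'⟩ he' hfe
    have alt := bridge_alt hSC (he : StrongBridge E (a, b)) s
    have alt' := bridge_alt hSC (he' : StrongBridge E (a', b')) s
    by_cases c1 : Relation.ReflTransGen (fun x y => (x, y) ∈ E \ {(a, b)}) s (a, b).2 <;>
      by_cases c2 : Relation.ReflTransGen (fun x y => (x, y) ∈ E \ {(a', b')}) s (a', b').2 <;>
      simp only [hf, c1, c2, if_true, if_false, reduceIte] at hfe
    · -- both true : Sum.inr a = Sum.inr a'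
      have ha : a = a' := by simpa using hfe
      subst ha
      have hb : b = b' :=
        tail_unique (he : StrongBridge E (a, b)).1 (he' : StrongBridge E (a, b')).1
          (alt.resolve_left (not_not_intro c1)) (alt'.resolve_left (not_not_intro c2))
          (hSCr a s)
      rw [hb]
    · simp at hfe
    · simp at hfe
    · have hb : b = b' := by simpa using hfe
      subst hb
      have ha : a = a' :=
        head_unique (he : StrongBridge E (a, b)).1 (he' : StrongBridge E (a', b)).1
          c1 c2 (hSCr s b)
      rw [ha]
  have himg : f '' S ⊆ Sum.inl '' ({s}ᶜ : Set V) ∪ Sum.inr '' ({s}ᶜ : Set V) := by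
    rintro _ ⟨e, he, rfl⟩
    have alt := bridge_alt hSC (he : StrongBridge E e) s
    by_cases c : Relation.ReflTransGen (fun x y => (x, y) ∈ E \ {e}) s e.2
    · refine Or.inr ⟨e.1, ?_, by simp only [hf]; rw [if_pos c]⟩
      intro h
      exact alt.resolve_left (not_not_intro c) (h ▸ Relation.ReflTransGen.refl)
    · refine Or.inl ⟨e.2, ?_, by simp only [hf]; rw [if_neg c]⟩
      intro h
      exact c (h ▸ Relation.ReflTransGen.refl)
  have hcompl : ({s}ᶜ : Set V).ncard = Fintype.card V - 1 := by
    have h1 := Set.ncard_add_ncard_compl ({s} : Set V)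
    rw [Set.ncard_singleton, Nat.card_eq_fintype_card] at h1
    omega
  calc S.ncard = (f '' S).ncard := (Set.ncard_image_of_injOn hinj).symm
    _ ≤ (Sum.inl '' ({s}ᶜ : Set V) ∪ Sum.inr '' ({s}ᶜ : Set V)).ncard :=
        Set.ncard_le_ncard himg (Set.toFinite _)
    _ ≤ (Sum.inl '' ({s}ᶜ : Set V)).ncard + (Sum.inr '' ({s}ᶜ : Set V)).ncard :=
        Set.ncard_union_le _ _
    _ = ({s}ᶜ : Set V).ncard + ({s}ᶜ : Set V).ncard := by
        rw [Set.ncard_image_of_injective _ Sum.inl_injective,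
          Set.ncard_image_of_injective _ Sum.inr_injective]
    _ ≤ 2 * (Fintype.card V - 1) := by rw [hcompl]; omega
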